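/- Let G be a graph and T a tree decomposition of G of width at most k. Then there exists a bag B of T such that every connected component of G − B has at most |V(G)|/2 vertices. In particular, G has a 1/2-separator consisting of at most k+1 vertices. -/

import Mathlib

/-- Reachability in the graph `G` avoiding the vertex set `S`. -/
def UReach {V : Type} (G : SimpleGraph V) (S : Set V) (u v : V) : Prop :=
  Relation.ReflTransGen (fun a b => G.Adj a b ∧ a ∉ S ∧ b ∉ S) u v

/-- `S` is an α-separator of `G`: every connected component of `G − S`
has at most `α · |V(G)|` vertices. -/
def USep {V : Type} [Fintype V] (G : SimpleGraph V) (S : Set V) (α : ℚ) : Prop :=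
  ∀ v : V, v ∉ S → (({w : V | UReach G S v w}.ncard : ℚ)) ≤ α * (Fintype.card V : ℚ)

/-- `(T, bags)` is a tree decomposition of `G`. -/
def IsTreeDecomp {V ι : Type} (G : SimpleGraph V) (T : SimpleGraph ι)
    (bags : ι → Finset V) : Prop :=
  T.IsTree ∧
  (∀ v : V, ∃ i, v ∈ bags i) ∧
  (∀ u v : V, G.Adj u v → ∃ i, u ∈ bags i ∧ v ∈ bags i) ∧
  (∀ (v : V) (i j : ι), v ∈ bags i → v ∈ bags j →
    ∀ (p : T.Walk i j), p.IsPath → ∀ k ∈ p.support, v ∈ bags k)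

open SimpleGraph

/-- Reachability in the tree `T` avoiding the node `c`. -/
def TR {ι : Type} (T : SimpleGraph ι) (c : ι) : ι → ι → Prop :=
  Relation.ReflTransGen (fun a b => T.Adj a b ∧ a ≠ c ∧ b ≠ c)

namespace TRlemmas

variable {ι : Type} {T : SimpleGraph ι} {c a b : ι}

lemma TR.symm (h : TR T c a b) : TR T c b a := by
  induction h with
  | refl => exact .refl
  | tail h₁ h₂ ih =>
      exact Relation.ReflTransGen.trans
        (Relation.ReflTransGen.single ⟨h₂.1.symm, h₂.2.2, h₂.2.1⟩) ih

lemma TR.ne (h : TR T c a b) (ha : a ≠ c) : b ≠ c := by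
  induction h with
  | refl => exact ha
  | tail h₁ h₂ _ => exact h₂.2.2

lemma walk_toTR : ∀ {a : ι} (p : T.Walk a b), (∀ y ∈ p.support, y ≠ c) → TR T c a b := by
  intro a p
  induction p with
  | nil => intro _; exact .refl
  | @cons u x b h q ih =>
      intro hs
      refine Relation.ReflTransGen.head ⟨h, ?_, ?_⟩ (ih fun y hy => hs y (by simp [hy]))
      · exact hs u (by simp)
      · exact hs x (by simp)

lemma TR.toWalk (h : TR T c a b) (ha : a ≠ c) :
    ∃ p : T.Walk a b, ∀ y ∈ p.support, y ≠ c := by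
  induction h with
  | refl => exact ⟨Walk.nil, by simpa using ha⟩
  | @tail x y h₁ h₂ ih =>
      obtain ⟨p, hp⟩ := ih
      refine ⟨p.concat h₂.1, fun z hz => ?_⟩
      rw [Walk.support_concat, List.mem_append] at hz
      rcases hz with hz | hz
      · exact hp z hz
      · simp only [List.mem_singleton] at hz
        simpa [hz] using h₂.2.2

/-- In a tree, every path realizes the distance. -/
lemma path_length_eq_dist (ht : T.IsTree) (p : T.Walk a b) (hp : p.IsPath) :
    p.length = T.dist a b := by
  classical
  have h1 : T.dist a b ≤ p.length := SimpleGraph.dist_le p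
  obtain ⟨q, hq⟩ := ht.isConnected.exists_walk_length_eq_dist a b
  have huniq := isAcyclic_iff_path_unique.mp ht.IsAcyclic
    (⟨p, hp⟩ : T.Path a b) ⟨q.bypass, q.bypass_isPath⟩
  have hlen : p.length = q.bypass.length := by
    have := congrArg (fun r : T.Path a b => (r : T.Walk a b).length) huniq
    simpa using this
  have h2 : p.length ≤ T.dist a b := by
    rw [hlen, ← hq]
    exact Walk.length_bypass_le q
  omega

lemma dist_branch (ht : T.IsTree) {j₀ x : ι} (hadj : T.Adj c j₀) (h : TR T c j₀ x) :
    T.dist c x = T.dist j₀ x + 1 := by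
  classical
  obtain ⟨p, hp⟩ := TR.toWalk h hadj.ne'
  have hq : p.bypass.IsPath := p.bypass_isPath
  have hqc : c ∉ p.bypass.support := fun hc => hp c (p.support_bypass_subset hc) rfl
  have hcons : (Walk.cons hadj p.bypass).IsPath := hq.cons hqc
  have e1 := path_length_eq_dist ht _ hcons
  have e2 := path_length_eq_dist ht _ hq
  simp only [Walk.length_cons] at e1
  omega

/-- Weighted centroid of a tree: there is a node `c` such that every
branch at `c` carries at most half of the total weight. -/
lemma centroid {V : Type} [Fintype V] [Fintype ι] (ht : T.IsTree) (t : V → ι) :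
    ∃ c : ι, ∀ j : ι, j ≠ c → 2 * {v : V | TR T c j (t v)}.ncard ≤ Fintype.card V := by
  classical
  have hne : Nonempty ι := ht.isConnected.nonempty
  obtain ⟨c, -, hc⟩ := Finset.exists_min_image Finset.univ
    (fun i => ∑ v : V, T.dist i (t v)) ⟨Classical.arbitrary ι, Finset.mem_univ _⟩
  refine ⟨c, fun j hj => ?_⟩
  -- find the neighbour `b` of `c` in the direction of `j`
  obtain ⟨w⟩ := ht.isConnected c j
  have hwp : w.bypass.IsPath := w.bypass_isPath
  obtain ⟨x, q, hadj, hq, hcq⟩ :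
      ∃ (x : ι) (q : T.Walk x j), ∃ _ : T.Adj c x,
        q.IsPath ∧ c ∉ q.support := by
    cases hbp : w.bypass with
    | nil => exact absurd rfl hj.symm
    | cons hadj q =>
        rw [hbp, Walk.cons_isPath_iff] at hwp
        exact ⟨_, q, hadj, hwp.1, hwp.2⟩
  have hbj : TR T c x j := walk_toTR q (fun y hy he => hcq (he ▸ hy))
  have hsub : {v : V | TR T c j (t v)} ⊆ {v : V | TR T c x (t v)} := by
    intro v hv
    exact Relation.ReflTransGen.trans hbj hv
  have hmono := Set.ncard_le_ncard hsub (Set.toFinite _)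
  -- bound the branch through x
  set Af : Finset V := Finset.univ.filter (fun v => TR T c x (t v)) with hAf
  have hncard : {v : V | TR T c x (t v)}.ncard = Af.card := by
    rw [Set.ncard_eq_toFinset_card', Set.toFinset_setOf]
  -- distance computations
  have hd1 : ∀ v ∈ Af, T.dist c (t v) = T.dist x (t v) + 1 := by
    intro v hv
    rw [hAf, Finset.mem_filter] at hv
    exact dist_branch ht hadj hv.2
  have hd2 : ∀ v : V, T.dist x (t v) ≤ T.dist c (t v) + 1 := by
    intro v
    have htr := ht.isConnected.dist_triangle (u := x) (v := c) (w := t v)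
    have hxc : T.dist x c ≤ 1 := by
      have := SimpleGraph.dist_le (Walk.cons hadj.symm Walk.nil)
      simpa using this
    omega
  -- sum comparison
  have e1 : ∑ v ∈ Af, T.dist x (t v) + Af.card = ∑ v ∈ Af, T.dist c (t v) := by
    have h : ∑ v ∈ Af, (T.dist x (t v) + 1) = ∑ v ∈ Af, T.dist c (t v) :=
      Finset.sum_congr rfl fun v hv => (hd1 v hv).symm
    rw [Finset.sum_add_distrib, Finset.sum_const, smul_eq_mul, mul_one] at h
    exact h
  have e2 : ∑ v ∈ Finset.univ \ Af, T.dist x (t v) ≤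
      ∑ v ∈ Finset.univ \ Af, T.dist c (t v) + (Finset.univ \ Af).card := by
    have h : ∑ v ∈ Finset.univ \ Af, T.dist x (t v) ≤
        ∑ v ∈ Finset.univ \ Af, (T.dist c (t v) + 1) :=
      Finset.sum_le_sum fun v _ => hd2 v
    rwa [Finset.sum_add_distrib, Finset.sum_const, smul_eq_mul, mul_one] at h
  have hx : ∑ v ∈ Finset.univ \ Af, T.dist x (t v) + ∑ v ∈ Af, T.dist x (t v)
      = ∑ v : V, T.dist x (t v) := Finset.sum_sdiff (Finset.subset_univ Af)
  have hcsum : ∑ v ∈ Finset.univ \ Af, T.dist c (t v) + ∑ v ∈ Af, T.dist c (t v)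
      = ∑ v : V, T.dist c (t v) := Finset.sum_sdiff (Finset.subset_univ Af)
  have hmin : ∑ v : V, T.dist c (t v) ≤ ∑ v : V, T.dist x (t v) := hc x (Finset.mem_univ x)
  have hcardA : Af.card ≤ Fintype.card V := by
    simpa using Finset.card_le_univ Af
  have hsd : (Finset.univ \ Af).card = Fintype.card V - Af.card := by
    rw [Finset.card_sdiff_of_subset (Finset.subset_univ _), Finset.card_univ]
  omega

end TRlemmas

theorem stmt2 {V ι : Type} [Fintype V] [Fintype ι] (G : SimpleGraph V)
    (T : SimpleGraph ι) (bags : ι → Finset V) (k : ℕ)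
    (hdec : IsTreeDecomp G T bags)
    (hwidth : ∀ i, (bags i).card ≤ k + 1) :
    (∃ i : ι, USep G (↑(bags i)) (1/2)) ∧
      ∃ S : Finset V, S.card ≤ k + 1 ∧ USep G (↑S) (1/2) := by
  classical
  obtain ⟨htree, hcover, hedge, hconn⟩ := hdec
  choose t ht using hcover
  have hbag : ∀ (u : V) (c a b : ι), u ∉ bags c → u ∈ bags a → u ∈ bags b → TR T c a b := by
    intro u c a b huc hua hub
    obtain ⟨w⟩ := htree.isConnected a b
    have hall : ∀ y ∈ w.bypass.support, u ∈ bags y :=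
      hconn u a b hua hub w.bypass w.bypass_isPath
    exact TRlemmas.walk_toTR w.bypass (fun y hy he => huc (he ▸ hall y hy))
  obtain ⟨c, hcent⟩ := TRlemmas.centroid htree t
  have husep : USep G (↑(bags c)) (1/2) := by
    intro v0 hv0
    have hv0' : v0 ∉ bags c := by simpa using hv0
    have hsub : {w : V | UReach G (↑(bags c)) v0 w} ⊆ {w : V | TR T c (t v0) (t w)} := by
      intro w hw
      simp only [Set.mem_setOf_eq] at hw ⊢
      have hw' : Relation.ReflTransGen
          (fun a b => G.Adj a b ∧ a ∉ (↑(bags c) : Set V) ∧ b ∉ (↑(bags c) : Set V)) v0 w := hw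
      clear hw
      induction hw' with
      | refl => exact Relation.ReflTransGen.refl
      | @tail u w h₁ h₂ ih =>
          obtain ⟨m, hm1, hm2⟩ := hedge _ _ h₂.1
          have hu : u ∉ bags c := by simpa using h₂.2.1
          have hwc : w ∉ bags c := by simpa using h₂.2.2
          exact ih.trans ((hbag u c (t u) m hu (ht u) hm1).trans
            (TRlemmas.TR.symm (hbag w c (t w) m hwc (ht w) hm2)))
    have hne : t v0 ≠ c := fun he => hv0' (he ▸ ht v0)
    have hcard := hcent (t v0) hne
    have hle := Set.ncard_le_ncard hsub (Set.toFinite _)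
    have hfin : 2 * {w : V | UReach G (↑(bags c)) v0 w}.ncard ≤ Fintype.card V := by omega
    have hq : ((2 * {w : V | UReach G (↑(bags c)) v0 w}.ncard : ℕ) : ℚ)
        ≤ ((Fintype.card V : ℕ) : ℚ) := by exact_mod_cast hfin
    push_cast at hq
    linarith
  exact ⟨⟨c, husep⟩, ⟨bags c, hwidth c, husep⟩⟩
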